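/- Let X be a measurable space, ν a measure on X with ν(X) ≤ 1, and s₀, s₁ : X → [0,∞] measurable functions with s₀(x) + s₁(x) ≤ 1 for every x. Let p = ∫ s₁ dν (so p ≤ 1) and let Φ be the map on measures on X defined by Φ(μ) = ν.withDensity s₀ + p • μ, where ν.withDensity s₀ is the measure with density s₀ with respect to ν. Then Φ is monotone, and: (i) if p < 1, the least fixed point of Φ is (1 − p)⁻¹ • (ν.withDensity s₀), which is a measure of total mass at most 1; (ii) if p = 1, then ν.withDensity s₀ is the zero measure and the least fixed point of Φ is the zero measure. -/
import Mathlib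


open MeasureTheory
open scoped ENNReal

theorem stmt_14 {X : Type*} [MeasurableSpace X] (ν : Measure X)
    (hν : ν Set.univ ≤ 1) (s₀ s₁ : X → ℝ≥0∞)
    (hs₀ : Measurable s₀) (hs₁ : Measurable s₁)
    (hsum : ∀ x, s₀ x + s₁ x ≤ 1)
    (p : ℝ≥0∞) (hp : p = ∫⁻ x, s₁ x ∂ν)
    (Φ : Measure X → Measure X)
    (hΦ : Φ = fun μ => ν.withDensity s₀ + p • μ) :
    p ≤ 1 ∧
    Monotone Φ ∧
    (∀ hmono : Monotone Φ,
      (p < 1 →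
        OrderHom.lfp ⟨Φ, hmono⟩ = (1 - p)⁻¹ • ν.withDensity s₀ ∧
        ((1 - p)⁻¹ • ν.withDensity s₀ : Measure X) Set.univ ≤ 1) ∧
      (p = 1 →
        ν.withDensity s₀ = 0 ∧ OrderHom.lfp ⟨Φ, hmono⟩ = 0)) := by
  -- total integral inequality: ∫ s₀ + p ≤ 1
  have hint : (∫⁻ x, s₀ x ∂ν) + p ≤ 1 := by
    rw [hp, ← lintegral_add_left hs₀]
    calc (∫⁻ x, s₀ x + s₁ x ∂ν) ≤ ∫⁻ _, 1 ∂ν := lintegral_mono hsum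
    _ = ν Set.univ := by simp
    _ ≤ 1 := hν
  have hp1 : p ≤ 1 := le_trans (le_add_self) hint
  have hmono : Monotone Φ := by
    intro μ μ' h
    simp only [hΦ]
    refine add_le_add le_rfl (Measure.le_iff.mpr fun A hA => ?_)
    rw [Measure.smul_apply, Measure.smul_apply]
    exact mul_le_mul_right (Measure.le_iff.mp h A hA) p
  refine ⟨hp1, hmono, fun hmono' => ⟨fun hlt => ?_, fun hpe => ?_⟩⟩
  · -- p < 1 case
    set L := OrderHom.lfp (⟨Φ, hmono'⟩ : Measure X →o Measure X) with hLdef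
    have h1p0 : (1 : ℝ≥0∞) - p ≠ 0 := (tsub_pos_of_lt hlt).ne'
    have h1pt : (1 : ℝ≥0∞) - p ≠ ∞ := (tsub_le_self.trans_lt (by norm_num)).ne
    have hkey : (1 - p)⁻¹ = 1 + p * (1 - p)⁻¹ := by
      have : (1 : ℝ≥0∞) = (1 - p) + p := (tsub_add_cancel_of_le hp1).symm
      calc (1 - p)⁻¹ = 1 * (1 - p)⁻¹ := (one_mul _).symm
      _ = ((1 - p) + p) * (1 - p)⁻¹ := by rw [← this]
      _ = (1 - p) * (1 - p)⁻¹ + p * (1 - p)⁻¹ := by ring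
      _ = 1 + p * (1 - p)⁻¹ := by rw [ENNReal.mul_inv_cancel h1p0 h1pt]
    have hfix : Φ ((1 - p)⁻¹ • ν.withDensity s₀) = (1 - p)⁻¹ • ν.withDensity s₀ := by
      simp only [hΦ]
      rw [smul_smul]
      nth_rewrite 1 [← one_smul ℝ≥0∞ (ν.withDensity s₀)]
      rw [← add_smul, ← hkey]
    have hle : L ≤ (1 - p)⁻¹ • ν.withDensity s₀ :=
      OrderHom.lfp_le_fixed _ hfix
    have hL : ν.withDensity s₀ + p • L = L := by
      have h2 : Φ L = L := by rw [hLdef]; exact OrderHom.map_lfp (⟨Φ, hmono'⟩ : Measure X →o Measure X)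
      rw [hΦ] at h2
      exact h2
    have hgeo : ∀ n : ℕ, (∑ i ∈ Finset.range n, p ^ i) • ν.withDensity s₀ ≤ L := by
      intro n
      induction n with
      | zero => simpa using Measure.zero_le _
      | succ n ih =>
        rw [geom_sum_succ, add_smul, mul_smul, one_smul, add_comm]
        calc ν.withDensity s₀ + p • ((∑ i ∈ Finset.range n, p ^ i) • ν.withDensity s₀)
            ≤ ν.withDensity s₀ + p • L := by
              refine add_le_add le_rfl (Measure.le_iff.mpr fun A hA => ?_)
              rw [Measure.smul_apply, Measure.smul_apply]
              exact mul_le_mul_right (Measure.le_iff.mp ih A hA) p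
        _ = L := hL
    have hge : (1 - p)⁻¹ • ν.withDensity s₀ ≤ L := by
      rw [Measure.le_iff]
      intro A hA
      rw [Measure.smul_apply, smul_eq_mul, ← ENNReal.tsum_geometric,
        ENNReal.tsum_eq_iSup_nat]
      rw [ENNReal.iSup_mul]
      refine iSup_le fun n => ?_
      have := hgeo n
      rw [Measure.le_iff] at this
      simpa using this A hA
    refine ⟨le_antisymm hle hge, ?_⟩
    -- total mass
    have hs0le : (∫⁻ x, s₀ x ∂ν) ≤ 1 - p := ENNReal.le_sub_of_add_le_right (hp1.trans_lt (by norm_num)).ne hint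
    calc ((1 - p)⁻¹ • ν.withDensity s₀ : Measure X) Set.univ
        = (1 - p)⁻¹ * ∫⁻ x, s₀ x ∂ν := by
          rw [Measure.smul_apply, smul_eq_mul, withDensity_apply _ MeasurableSet.univ,
            Measure.restrict_univ]
    _ ≤ (1 - p)⁻¹ * (1 - p) := mul_le_mul_right hs0le _
    _ = 1 := ENNReal.inv_mul_cancel h1p0 h1pt
  · -- p = 1 case
    have h0 : (∫⁻ x, s₀ x ∂ν) = 0 := by
      rw [hpe] at hint
      have := ENNReal.le_sub_of_add_le_right (by norm_num) hint
      simpa using this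
    have hzero : ν.withDensity s₀ = 0 := by
      rw [← Measure.measure_univ_eq_zero, withDensity_apply _ MeasurableSet.univ,
        Measure.restrict_univ]
      exact h0
    refine ⟨hzero, le_antisymm (OrderHom.lfp_le _ ?_) (Measure.zero_le _)⟩
    simp [hΦ, hzero]
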